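/- In the reduction graph G(φ), if I is a satisfying truth assignment of φ, then the set S = T(I) ∪ F(I) ∪ {c_j : C_j is traversable with respect to I} is a minimal a-b separator of G(φ) of size at least 4, and moreover it is an inclusion-wise minimal separator. -/

import Mathlib

open SimpleGraph

variable {V : Type*}

/-- `S` is an `a`-`b` separator: `a, b ∉ S` and they are in different components of `G - S`. -/
def IsABSep (G : SimpleGraph V) (S : Set V) (a b : V) : Prop :=
  ∃ (ha : a ∈ Sᶜ) (hb : b ∈ Sᶜ), ¬ (G.induce Sᶜ).Reachable ⟨a, ha⟩ ⟨b, hb⟩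

/-- `S` is a separator of `G`. -/
def IsSep (G : SimpleGraph V) (S : Set V) : Prop :=
  ∃ a b, IsABSep G S a b

/-- `S` is a minimal `a`-`b` separator: no proper subset is an `a`-`b` separator. -/
def IsMinABSep (G : SimpleGraph V) (S : Set V) (a b : V) : Prop :=
  IsABSep G S a b ∧ ∀ T ⊂ S, ¬ IsABSep G T a b

/-- `S` is an inclusion-wise minimal separator: no proper subset is a separator. -/
def IsInclMinSep (G : SimpleGraph V) (S : Set V) : Prop :=
  IsSep G S ∧ ∀ T ⊂ S, ¬ IsSep G T

/-- A literal is a variable together with a polarity (true = positive). -/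
abbrev Lit := ℕ × Bool

/-- A 3-clause. -/
abbrev Clause3 := Lit × Lit × Lit

/-- A 3-CNF formula. -/
abbrev CNF3 := List Clause3

/-- A literal holds under an assignment. -/
def LitHolds (I : ℕ → Prop) (l : Lit) : Prop :=
  if l.2 then I l.1 else ¬ I l.1

/-- A clause holds under an assignment. -/
def ClauseHolds (I : ℕ → Prop) (C : Clause3) : Prop :=
  LitHolds I C.1 ∨ LitHolds I C.2.1 ∨ LitHolds I C.2.2

/-- The i-th literal of a clause. -/
def clauseLit (C : Clause3) (i : Fin 3) : Lit :=
  if i.val = 0 then C.1 else if i.val = 1 then C.2.1 else C.2.2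

/-- The i-th literal ℓ_i^j of the j-th clause of φ. -/
def lit (φ : CNF3) (j : Fin φ.length) (i : Fin 3) : Lit :=
  clauseLit (φ.get j) i

/-- The variable of the literal ℓ_i^j. -/
def lvar (φ : CNF3) (j : Fin φ.length) (i : Fin 3) : ℕ := (lit φ j i).1

/-- The polarity of the literal ℓ_i^j (true = positive). -/
def lpos (φ : CNF3) (j : Fin φ.length) (i : Fin 3) : Bool := (lit φ j i).2

/-- Index set for the conflict vertices: pairs (u_i^j, w_{i'}^{j'}) of vertices whose
literals share the same variable, with j ≠ j'. -/
def Conflict (φ : CNF3) :=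
  {p : (Fin φ.length × Fin 3) × (Fin φ.length × Fin 3) //
    lvar φ p.1.1 p.1.2 = lvar φ p.2.1 p.2.2 ∧ p.1.1 ≠ p.2.1}

/-- Index set for the pendant vertices: one for each of a, b, one for each conflict vertex,
and one for each middle vertex v_i^j. -/
def PendIdx (φ : CNF3) := Fin 2 ⊕ Conflict φ ⊕ (Fin φ.length × Fin 3)

/-- The vertex set of the reduction graph G(φ): path vertices (j, i, k) with k = 0, 1, 2
standing for u_i^j, v_i^j, w_i^j; clause vertices c_j; conflict vertices; pendant vertices;
and the two terminals a, b. -/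
def Vtx (φ : CNF3) :=
  (Fin φ.length × Fin 3 × Fin 3) ⊕ Fin φ.length ⊕ Conflict φ ⊕ PendIdx φ ⊕ Fin 2

/-- The path vertex: `pathV φ j i 0 = u_i^j`, `pathV φ j i 1 = v_i^j`, `pathV φ j i 2 = w_i^j`. -/
def pathV (φ : CNF3) (j : Fin φ.length) (i : Fin 3) (k : Fin 3) : Vtx φ :=
  Sum.inl (j, i, k)

/-- The clause vertex c_j. -/
def cV (φ : CNF3) (j : Fin φ.length) : Vtx φ := Sum.inr (Sum.inl j)

/-- A conflict vertex y. -/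
def yV (φ : CNF3) (q : Conflict φ) : Vtx φ := Sum.inr (Sum.inr (Sum.inl q))

/-- A pendant vertex z. -/
def zV (φ : CNF3) (q : PendIdx φ) : Vtx φ := Sum.inr (Sum.inr (Sum.inr (Sum.inl q)))

/-- The terminal a. -/
def aV (φ : CNF3) : Vtx φ := Sum.inr (Sum.inr (Sum.inr (Sum.inr 0)))

/-- The terminal b. -/
def bV (φ : CNF3) : Vtx φ := Sum.inr (Sum.inr (Sum.inr (Sum.inr 1)))

/-- The vertex to which a pendant vertex is attached. -/
def pendTarget (φ : CNF3) : PendIdx φ → Vtx φ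
  | Sum.inl t => if t = 0 then aV φ else bV φ
  | Sum.inr (Sum.inl q) => yV φ q
  | Sum.inr (Sum.inr (j, i)) => pathV φ j i 1

/-- The edges of the reduction graph G(φ) (as a relation, to be symmetrized):
the paths u_i^j—v_i^j—w_i^j, the edges from a to the u's and from b to the w's, the edges
from c_j to u_i^j (negative literal) or w_i^j (positive literal), the edges from each
conflict vertex to its conflicting pair, and the pendant edges. -/
def redRel (φ : CNF3) : Vtx φ → Vtx φ → Prop := fun x y =>
  (∃ j i, (x = pathV φ j i 0 ∧ y = pathV φ j i 1) ∨ (x = pathV φ j i 1 ∧ y = pathV φ j i 2)) ∨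
  (∃ j i, x = aV φ ∧ y = pathV φ j i 0) ∨
  (∃ j i, x = bV φ ∧ y = pathV φ j i 2) ∨
  (∃ j i, x = cV φ j ∧
    ((lpos φ j i = false ∧ y = pathV φ j i 0) ∨ (lpos φ j i = true ∧ y = pathV φ j i 2))) ∨
  (∃ q : Conflict φ, x = yV φ q ∧
    (y = pathV φ q.1.1.1 q.1.1.2 0 ∨ y = pathV φ q.1.2.1 q.1.2.2 2)) ∨
  (∃ q : PendIdx φ, x = zV φ q ∧ y = pendTarget φ q)

/-- The reduction graph G(φ). -/
def Gred (φ : CNF3) : SimpleGraph (Vtx φ) := SimpleGraph.fromRel (redRel φ)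

/-- T(I): the vertices u_i^j whose variable is assigned 1 by I. -/
def TSet (φ : CNF3) (I : ℕ → Prop) : Set (Vtx φ) :=
  {x | ∃ j i, x = pathV φ j i 0 ∧ I (lvar φ j i)}

/-- F(I): the vertices w_i^j whose variable is assigned 0 by I. -/
def FSet (φ : CNF3) (I : ℕ → Prop) : Set (Vtx φ) :=
  {x | ∃ j i, x = pathV φ j i 2 ∧ ¬ I (lvar φ j i)}

/-- A clause is traversable w.r.t. I if it has a negative literal whose variable is assigned
0 and a positive literal whose variable is assigned 1. -/
def TraversableClause (φ : CNF3) (I : ℕ → Prop) (j : Fin φ.length) : Prop :=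
  (∃ i, lpos φ j i = false ∧ ¬ I (lvar φ j i)) ∧ (∃ i, lpos φ j i = true ∧ I (lvar φ j i))

variable {φ : CNF3} {I : ℕ → Prop}

lemma pathV_inj {j j' : Fin φ.length} {i i' k k' : Fin 3} :
    pathV φ j i k = pathV φ j' i' k' ↔ j = j' ∧ i = i' ∧ k = k' := by
  constructor
  · intro h
    have h2 := Sum.inl.inj h
    exact ⟨congrArg Prod.fst h2, congrArg (fun p => p.2.1) h2, congrArg (fun p => p.2.2) h2⟩
  · rintro ⟨rfl, rfl, rfl⟩; rfl

lemma cV_inj {j j' : Fin φ.length} : cV φ j = cV φ j' ↔ j = j' := by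
  constructor
  · intro h; exact Sum.inl.inj (Sum.inr.inj h)
  · rintro rfl; rfl

lemma pathV_ne_cV {j j' : Fin φ.length} {i k} : pathV φ j i k ≠ cV φ j' :=
  fun h => by cases h
lemma cV_ne_pathV {j j' : Fin φ.length} {i k} : cV φ j' ≠ pathV φ j i k :=
  fun h => by cases h
lemma yV_ne_pathV {q j i k} : yV φ q ≠ pathV φ j i k := fun h => by cases h
lemma yV_ne_cV {q} {j : Fin φ.length} : yV φ q ≠ cV φ j :=
  fun h => by cases h
lemma zV_ne_pathV {q j i k} : zV φ q ≠ pathV φ j i k := fun h => by cases h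
lemma zV_ne_cV {q} {j : Fin φ.length} : zV φ q ≠ cV φ j :=
  fun h => by cases h
lemma aV_ne_pathV {j i k} : aV φ ≠ pathV φ j i k := fun h => by cases h
lemma aV_ne_cV {j : Fin φ.length} : aV φ ≠ cV φ j :=
  fun h => by cases h
lemma bV_ne_pathV {j i k} : bV φ ≠ pathV φ j i k := fun h => by cases h
lemma bV_ne_cV {j : Fin φ.length} : bV φ ≠ cV φ j :=
  fun h => by cases h

def SepS (φ : CNF3) (I : ℕ → Prop) : Set (Vtx φ) :=
  TSet φ I ∪ FSet φ I ∪ {x | ∃ j, x = cV φ j ∧ TraversableClause φ I j}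

lemma u_mem_S {j i} : pathV φ j i 0 ∈ SepS φ I ↔ I (lvar φ j i) := by
  constructor
  · rintro ((⟨j',i',h,hI⟩|⟨j',i',h,hI⟩)|⟨j',h,-⟩)
    · obtain ⟨rfl,rfl,-⟩ := pathV_inj.mp h; exact hI
    · exact absurd (pathV_inj.mp h).2.2 (by decide)
    · exact absurd h pathV_ne_cV
  · intro h; exact Or.inl (Or.inl ⟨j, i, rfl, h⟩)

lemma w_mem_S {j i} : pathV φ j i 2 ∈ SepS φ I ↔ ¬ I (lvar φ j i) := by
  constructor
  · rintro ((⟨j',i',h,hI⟩|⟨j',i',h,hI⟩)|⟨j',h,-⟩)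
    · exact absurd (pathV_inj.mp h).2.2 (by decide)
    · obtain ⟨rfl,rfl,-⟩ := pathV_inj.mp h; exact hI
    · exact absurd h pathV_ne_cV
  · intro h; exact Or.inl (Or.inr ⟨j, i, rfl, h⟩)

lemma v_not_S {j i} : pathV φ j i 1 ∉ SepS φ I := by
  rintro ((⟨j',i',h,-⟩|⟨j',i',h,-⟩)|⟨j',h,-⟩)
  · exact absurd (pathV_inj.mp h).2.2 (by decide)
  · exact absurd (pathV_inj.mp h).2.2 (by decide)
  · exact absurd h pathV_ne_cV

lemma c_mem_S {j} : cV φ j ∈ SepS φ I ↔ TraversableClause φ I j := by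
  constructor
  · rintro ((⟨j',i',h,-⟩|⟨j',i',h,-⟩)|⟨j',h,ht⟩)
    · exact absurd h cV_ne_pathV
    · exact absurd h cV_ne_pathV
    · exact (cV_inj.mp h) ▸ ht
  · intro h; exact Or.inr ⟨j, rfl, h⟩

lemma y_not_S {q} : yV φ q ∉ SepS φ I := by
  rintro ((⟨j',i',h,-⟩|⟨j',i',h,-⟩)|⟨j',h,-⟩)
  exacts [absurd h yV_ne_pathV, absurd h yV_ne_pathV, absurd h yV_ne_cV]

lemma z_not_S {q} : zV φ q ∉ SepS φ I := by
  rintro ((⟨j',i',h,-⟩|⟨j',i',h,-⟩)|⟨j',h,-⟩)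
  exacts [absurd h zV_ne_pathV, absurd h zV_ne_pathV, absurd h zV_ne_cV]

lemma a_not_S : aV φ ∉ SepS φ I := by
  rintro ((⟨j',i',h,-⟩|⟨j',i',h,-⟩)|⟨j',h,-⟩)
  exacts [absurd h aV_ne_pathV, absurd h aV_ne_pathV, absurd h aV_ne_cV]

lemma b_not_S : bV φ ∉ SepS φ I := by
  rintro ((⟨j',i',h,-⟩|⟨j',i',h,-⟩)|⟨j',h,-⟩)
  exacts [absurd h bV_ne_pathV, absurd h bV_ne_pathV, absurd h bV_ne_cV]
def side (φ : CNF3) (I : ℕ → Prop) : Vtx φ → Prop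
  | Sum.inl (j, i, k) => if k.val = 0 then False else if k.val = 1 then I (lvar φ j i) else True
  | Sum.inr (Sum.inl j) => ∃ i, lpos φ j i = true ∧ I (lvar φ j i)
  | Sum.inr (Sum.inr (Sum.inl q)) => I (lvar φ q.1.1.1 q.1.1.2)
  | Sum.inr (Sum.inr (Sum.inr (Sum.inl (Sum.inl t)))) => t.val = 1
  | Sum.inr (Sum.inr (Sum.inr (Sum.inl (Sum.inr (Sum.inl q))))) => I (lvar φ q.1.1.1 q.1.1.2)
  | Sum.inr (Sum.inr (Sum.inr (Sum.inl (Sum.inr (Sum.inr (j, i)))))) => I (lvar φ j i)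
  | Sum.inr (Sum.inr (Sum.inr (Sum.inr t))) => t.val = 1

lemma side_u {j i} : side φ I (pathV φ j i 0) = False := rfl
lemma side_v {j i} : side φ I (pathV φ j i 1) = I (lvar φ j i) := rfl
lemma side_w {j i} : side φ I (pathV φ j i 2) = True := rfl
lemma side_c {j} : side φ I (cV φ j) = ∃ i, lpos φ j i = true ∧ I (lvar φ j i) := rfl
lemma side_y {q} : side φ I (yV φ q) = I (lvar φ q.1.1.1 q.1.1.2) := rfl
lemma side_a : side φ I (aV φ) = ((0:Fin 2).val = 1) := rfl
lemma side_b : side φ I (bV φ) = ((1:Fin 2).val = 1) := rfl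

lemma redRel_side {x y : Vtx φ}
    (h : redRel φ x y) (hx : x ∉ SepS φ I) (hy : y ∉ SepS φ I) :
    (side φ I x ↔ side φ I y) := by
  rcases h with ⟨j, i, ⟨rfl, rfl⟩ | ⟨rfl, rfl⟩⟩ | ⟨j, i, rfl, rfl⟩ | ⟨j, i, rfl, rfl⟩
    | ⟨j, i, rfl, ⟨hl, rfl⟩ | ⟨hl, rfl⟩⟩ | ⟨q, rfl, rfl | rfl⟩ | ⟨q, rfl, rfl⟩
  · -- u -- v
    rw [u_mem_S] at hx
    simp [side_u, side_v, hx]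
  · -- v -- w
    rw [w_mem_S] at hy
    simp [side_v, side_w]
    exact not_not.mp hy
  · -- a -- u
    simp [side_a, side_u]
  · -- b -- w
    simp [side_b, side_w]
  · -- c -- u (negative literal)
    rw [c_mem_S] at hx; rw [u_mem_S] at hy
    simp only [side_c, side_u, iff_false, eq_iff_iff]
    rintro ⟨i', hp, hIi⟩
    exact hx ⟨⟨i, hl, hy⟩, ⟨i', hp, hIi⟩⟩
  · -- c -- w (positive literal)
    rw [c_mem_S] at hx; rw [w_mem_S] at hy
    simp only [side_c, side_w, iff_true, eq_iff_iff]
    exact ⟨i, hl, not_not.mp hy⟩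
  · -- y -- u
    rw [u_mem_S] at hy
    simp [side_y, side_u, hy]
  · -- y -- w
    rw [w_mem_S] at hy
    have := q.2.1
    simp [side_y, side_w, this, not_not.mp hy]
  · -- z -- pendTarget
    rcases q with t | q' | ⟨j, i⟩
    · rcases Fin.exists_fin_two.mp ⟨t, rfl⟩ with rfl | rfl
      · simp [pendTarget, side, zV, aV]
      · simp [pendTarget, side, zV, bV]
    · exact Iff.rfl
    · exact Iff.rfl
lemma gred_adj {x y : Vtx φ} :
    (Gred φ).Adj x y ↔ x ≠ y ∧ (redRel φ x y ∨ redRel φ y x) := by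
  rw [Gred, SimpleGraph.fromRel_adj]

lemma adj_side {x y : Vtx φ} (h : (Gred φ).Adj x y)
    (hx : x ∉ SepS φ I) (hy : y ∉ SepS φ I) : (side φ I x ↔ side φ I y) := by
  rcases gred_adj.mp h with ⟨-, h | h⟩
  · exact redRel_side h hx hy
  · exact (redRel_side h hy hx).symm

lemma walk_side {x y : ↥(SepS φ I)ᶜ}
    (p : ((Gred φ).induce (SepS φ I)ᶜ).Walk x y) : side φ I x.1 ↔ side φ I y.1 := by
  induction p with
  | nil => exact Iff.rfl
  | @cons u v w h _ ih => exact (adj_side h u.2 v.2).trans ih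

lemma not_reach_ab (ha : aV φ ∈ (SepS φ I)ᶜ) (hb : bV φ ∈ (SepS φ I)ᶜ) :
    ¬ ((Gred φ).induce (SepS φ I)ᶜ).Reachable ⟨aV φ, ha⟩ ⟨bV φ, hb⟩ := by
  intro hr
  obtain ⟨p⟩ := hr
  have := walk_side p
  rw [side_a, side_b] at this
  simp at this
section conn
variable {T : Set (Vtx φ)}

lemma adjT {x y : Vtx φ} (hx : x ∈ Tᶜ) (hy : y ∈ Tᶜ) (hne : x ≠ y)
    (h : redRel φ x y ∨ redRel φ y x) :
    ((Gred φ).induce Tᶜ).Reachable ⟨x, hx⟩ ⟨y, hy⟩ := by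
  have : ((Gred φ).induce Tᶜ).Adj ⟨x, hx⟩ ⟨y, hy⟩ := gred_adj.mpr ⟨hne, h⟩
  exact this.reachable

-- basic edges as redRel instances
lemma rel_uv {j i} : redRel φ (pathV φ j i 0) (pathV φ j i 1) :=
  Or.inl ⟨j, i, Or.inl ⟨rfl, rfl⟩⟩
lemma rel_vw {j i} : redRel φ (pathV φ j i 1) (pathV φ j i 2) :=
  Or.inl ⟨j, i, Or.inr ⟨rfl, rfl⟩⟩
lemma rel_au {j i} : redRel φ (aV φ) (pathV φ j i 0) :=
  Or.inr (Or.inl ⟨j, i, rfl, rfl⟩)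
lemma rel_bw {j i} : redRel φ (bV φ) (pathV φ j i 2) :=
  Or.inr (Or.inr (Or.inl ⟨j, i, rfl, rfl⟩))
lemma rel_cu {j i} (h : lpos φ j i = false) : redRel φ (cV φ j) (pathV φ j i 0) :=
  Or.inr (Or.inr (Or.inr (Or.inl ⟨j, i, rfl, Or.inl ⟨h, rfl⟩⟩)))
lemma rel_cw {j i} (h : lpos φ j i = true) : redRel φ (cV φ j) (pathV φ j i 2) :=
  Or.inr (Or.inr (Or.inr (Or.inl ⟨j, i, rfl, Or.inr ⟨h, rfl⟩⟩)))
lemma rel_yu {q : Conflict φ} : redRel φ (yV φ q) (pathV φ q.1.1.1 q.1.1.2 0) :=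
  Or.inr (Or.inr (Or.inr (Or.inr (Or.inl ⟨q, rfl, Or.inl rfl⟩))))
lemma rel_yw {q : Conflict φ} : redRel φ (yV φ q) (pathV φ q.1.2.1 q.1.2.2 2) :=
  Or.inr (Or.inr (Or.inr (Or.inr (Or.inl ⟨q, rfl, Or.inr rfl⟩))))
lemma rel_z {q : PendIdx φ} : redRel φ (zV φ q) (pendTarget φ q) :=
  Or.inr (Or.inr (Or.inr (Or.inr (Or.inr ⟨q, rfl, rfl⟩))))

lemma pathV_ne {j j' : Fin φ.length} {i i' : Fin 3} {k k' : Fin 3} (h : k ≠ k') :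
    pathV φ j i k ≠ pathV φ j' i' k' := fun he => h (pathV_inj.mp he).2.2

-- extraction from satisfied clause
lemma clause_lit (hI : ∀ C ∈ φ, ClauseHolds I C) (j : Fin φ.length) :
    ∃ i, (lpos φ j i = true ∧ I (lvar φ j i)) ∨ (lpos φ j i = false ∧ ¬ I (lvar φ j i)) := by
  have h := hI (φ.get j) (φ.get_mem j)
  have e0 : lit φ j 0 = (φ.get j).1 := rfl
  have e1 : lit φ j 1 = (φ.get j).2.1 := rfl
  have e2 : lit φ j 2 = (φ.get j).2.2 := rfl
  rcases h with h | h | h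
  · refine ⟨0, ?_⟩
    unfold LitHolds at h
    rcases hb : (φ.get j).1.2 with _ | _ <;> rw [hb] at h <;> simp at h
    · exact Or.inr ⟨by rw [lpos, e0, hb], by rw [lvar, e0]; exact h⟩
    · exact Or.inl ⟨by rw [lpos, e0, hb], by rw [lvar, e0]; exact h⟩
  · refine ⟨1, ?_⟩
    unfold LitHolds at h
    rcases hb : (φ.get j).2.1.2 with _ | _ <;> rw [hb] at h <;> simp at h
    · exact Or.inr ⟨by rw [lpos, e1, hb], by rw [lvar, e1]; exact h⟩
    · exact Or.inl ⟨by rw [lpos, e1, hb], by rw [lvar, e1]; exact h⟩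
  · refine ⟨2, ?_⟩
    unfold LitHolds at h
    rcases hb : (φ.get j).2.2.2 with _ | _ <;> rw [hb] at h <;> simp at h
    · exact Or.inr ⟨by rw [lpos, e2, hb], by rw [lvar, e2]; exact h⟩
    · exact Or.inl ⟨by rw [lpos, e2, hb], by rw [lvar, e2]; exact h⟩

end conn
lemma zV_ne_aV {p} : zV φ p ≠ aV φ :=
  fun h => by cases h
lemma zV_ne_bV {p} : zV φ p ≠ bV φ :=
  fun h => by cases h
lemma zV_ne_yV {p q} : zV φ p ≠ yV φ q :=
  fun h => by cases h

section conn2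
variable {T : Set (Vtx φ)}

lemma notT_of_notS (hT : T ⊆ SepS φ I) {x : Vtx φ} (hx : x ∉ SepS φ I) : x ∈ Tᶜ :=
  fun h => hx (hT h)

lemma reach_v (hT : T ⊆ SepS φ I) {j i} (hv : pathV φ j i 1 ∈ Tᶜ)
    (ha : aV φ ∈ Tᶜ) (hb : bV φ ∈ Tᶜ) :
    ((Gred φ).induce Tᶜ).Reachable ⟨_, hv⟩ ⟨aV φ, ha⟩ ∨
    ((Gred φ).induce Tᶜ).Reachable ⟨_, hv⟩ ⟨bV φ, hb⟩ := by
  by_cases hIv : I (lvar φ j i)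
  · right
    have hw : pathV φ j i 2 ∈ Tᶜ := notT_of_notS hT (by rw [w_mem_S]; exact not_not_intro hIv)
    exact (adjT hv hw (pathV_ne (by decide)) (Or.inl rel_vw)).trans
      (adjT hw hb (Ne.symm bV_ne_pathV) (Or.inr rel_bw))
  · left
    have hu : pathV φ j i 0 ∈ Tᶜ := notT_of_notS hT (by rw [u_mem_S]; exact hIv)
    exact (adjT hv hu (pathV_ne (by decide)) (Or.inr rel_uv)).trans
      (adjT hu ha (Ne.symm aV_ne_pathV) (Or.inr rel_au))

lemma reach_y (hT : T ⊆ SepS φ I) {q : Conflict φ} (hy : yV φ q ∈ Tᶜ)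
    (ha : aV φ ∈ Tᶜ) (hb : bV φ ∈ Tᶜ) :
    ((Gred φ).induce Tᶜ).Reachable ⟨_, hy⟩ ⟨aV φ, ha⟩ ∨
    ((Gred φ).induce Tᶜ).Reachable ⟨_, hy⟩ ⟨bV φ, hb⟩ := by
  by_cases hIv : I (lvar φ q.1.1.1 q.1.1.2)
  · right
    have hw : pathV φ q.1.2.1 q.1.2.2 2 ∈ Tᶜ := notT_of_notS hT
      (by rw [w_mem_S]; exact not_not_intro (q.2.1 ▸ hIv))
    exact (adjT hy hw yV_ne_pathV (Or.inl rel_yw)).trans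
      (adjT hw hb (Ne.symm bV_ne_pathV) (Or.inr rel_bw))
  · left
    have hu : pathV φ q.1.1.1 q.1.1.2 0 ∈ Tᶜ := notT_of_notS hT (by rw [u_mem_S]; exact hIv)
    exact (adjT hy hu yV_ne_pathV (Or.inl rel_yu)).trans
      (adjT hu ha (Ne.symm aV_ne_pathV) (Or.inr rel_au))

lemma reach_ab (hI : ∀ C ∈ φ, ClauseHolds I C) (hT : T ⊆ SepS φ I)
    (ha : aV φ ∈ Tᶜ) (hb : bV φ ∈ Tᶜ) :
    ∀ (x : Vtx φ) (hx : x ∈ Tᶜ),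
      ((Gred φ).induce Tᶜ).Reachable ⟨x, hx⟩ ⟨aV φ, ha⟩ ∨
      ((Gred φ).induce Tᶜ).Reachable ⟨x, hx⟩ ⟨bV φ, hb⟩ := by
  intro x hx
  rcases x with ⟨j, i, k⟩ | j | q | p | t
  · -- path vertex
    rcases k with ⟨kv, hk⟩
    interval_cases kv
    · exact Or.inl (adjT hx ha (Ne.symm (aV_ne_pathV (j := j) (i := i) (k := 0))) (Or.inr rel_au))
    · exact reach_v (j := j) (i := i) hT hx ha hb
    · exact Or.inr (adjT hx hb (Ne.symm (bV_ne_pathV (j := j) (i := i) (k := 2))) (Or.inr rel_bw))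
  · -- clause vertex
    obtain ⟨i, ⟨hpos, hIi⟩ | ⟨hneg, hIi⟩⟩ := clause_lit hI j
    · right
      have hw : pathV φ j i 2 ∈ Tᶜ := notT_of_notS hT (by rw [w_mem_S]; exact not_not_intro hIi)
      exact (adjT hx hw cV_ne_pathV (Or.inl (rel_cw hpos))).trans
        (adjT hw hb (Ne.symm bV_ne_pathV) (Or.inr rel_bw))
    · left
      have hu : pathV φ j i 0 ∈ Tᶜ := notT_of_notS hT (by rw [u_mem_S]; exact hIi)
      exact (adjT hx hu cV_ne_pathV (Or.inl (rel_cu hneg))).trans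
        (adjT hu ha (Ne.symm aV_ne_pathV) (Or.inr rel_au))
  · -- conflict vertex
    exact reach_y hT hx ha hb
  · -- pendant vertex
    rcases p with t | q | ⟨j, i⟩
    · rcases Fin.exists_fin_two.mp ⟨t, rfl⟩ with rfl | rfl
      · exact Or.inl (adjT hx ha zV_ne_aV (Or.inl (rel_z (q := Sum.inl 0))))
      · exact Or.inr (adjT hx hb zV_ne_bV (Or.inl (rel_z (q := Sum.inl 1))))
    · have hy : yV φ q ∈ Tᶜ := notT_of_notS hT y_not_S
      have hzy : ((Gred φ).induce Tᶜ).Reachable ⟨_, hx⟩ ⟨_, hy⟩ :=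
        adjT hx hy zV_ne_yV (Or.inl (rel_z (q := Sum.inr (Sum.inl q))))
      rcases reach_y hT hy ha hb with h | h
      exacts [Or.inl (hzy.trans h), Or.inr (hzy.trans h)]
    · have hv : pathV φ j i 1 ∈ Tᶜ := notT_of_notS hT v_not_S
      have hzv : ((Gred φ).induce Tᶜ).Reachable ⟨_, hx⟩ ⟨_, hv⟩ :=
        adjT hx hv zV_ne_pathV (Or.inl (rel_z (q := Sum.inr (Sum.inr (j, i)))))
      rcases reach_v hT hv ha hb with h | h
      exacts [Or.inl (hzv.trans h), Or.inr (hzv.trans h)]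
  · -- terminals
    rcases Fin.exists_fin_two.mp ⟨t, rfl⟩ with rfl | rfl
    · exact Or.inl Reachable.rfl
    · exact Or.inr Reachable.rfl

lemma bridge (hT : T ⊆ SepS φ I) {s} (hs : s ∈ SepS φ I) (hsT : s ∈ Tᶜ)
    (ha : aV φ ∈ Tᶜ) (hb : bV φ ∈ Tᶜ) :
    ((Gred φ).induce Tᶜ).Reachable ⟨aV φ, ha⟩ ⟨bV φ, hb⟩ := by
  rcases hs with (⟨j, i, rfl, hIu⟩ | ⟨j, i, rfl, hIw⟩) | ⟨j, rfl, ⟨i1, hneg, hnI⟩, ⟨i2, hpos, hI2⟩⟩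
  · have hv : pathV φ j i 1 ∈ Tᶜ := notT_of_notS hT v_not_S
    have hw : pathV φ j i 2 ∈ Tᶜ := notT_of_notS hT (by rw [w_mem_S]; exact not_not_intro hIu)
    exact (adjT ha hsT aV_ne_pathV (Or.inl rel_au)).trans
      ((adjT hsT hv (pathV_ne (by decide)) (Or.inl rel_uv)).trans
      ((adjT hv hw (pathV_ne (by decide)) (Or.inl rel_vw)).trans
      (adjT hw hb (Ne.symm bV_ne_pathV) (Or.inr rel_bw))))
  · have hv : pathV φ j i 1 ∈ Tᶜ := notT_of_notS hT v_not_S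
    have hu : pathV φ j i 0 ∈ Tᶜ := notT_of_notS hT (by rw [u_mem_S]; exact hIw)
    exact (adjT ha hu aV_ne_pathV (Or.inl rel_au)).trans
      ((adjT hu hv (pathV_ne (by decide)) (Or.inl rel_uv)).trans
      ((adjT hv hsT (pathV_ne (by decide)) (Or.inl rel_vw)).trans
      (adjT hsT hb (Ne.symm bV_ne_pathV) (Or.inr rel_bw))))
  · have hu : pathV φ j i1 0 ∈ Tᶜ := notT_of_notS hT (by rw [u_mem_S]; exact hnI)
    have hw : pathV φ j i2 2 ∈ Tᶜ := notT_of_notS hT (by rw [w_mem_S]; exact not_not_intro hI2)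
    exact (adjT ha hu aV_ne_pathV (Or.inl rel_au)).trans
      ((adjT hu hsT pathV_ne_cV (Or.inr (rel_cu hneg))).trans
      ((adjT hsT hw cV_ne_pathV (Or.inl (rel_cw hpos))).trans
      (adjT hw hb (Ne.symm bV_ne_pathV) (Or.inr rel_bw))))

lemma conn_of_ssubset (hI : ∀ C ∈ φ, ClauseHolds I C) (hTs : T ⊂ SepS φ I) :
    ∀ x y : ↥Tᶜ, ((Gred φ).induce Tᶜ).Reachable x y := by
  obtain ⟨s, hsS, hsT⟩ := Set.exists_of_ssubset hTs
  have hT : T ⊆ SepS φ I := hTs.1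
  have ha : aV φ ∈ Tᶜ := notT_of_notS hT a_not_S
  have hb : bV φ ∈ Tᶜ := notT_of_notS hT b_not_S
  have hbr := bridge hT hsS hsT ha hb
  rintro ⟨x, hx⟩ ⟨y, hy⟩
  rcases reach_ab hI hT ha hb x hx with h1 | h1 <;>
    rcases reach_ab hI hT ha hb y hy with h2 | h2
  · exact h1.trans h2.symm
  · exact h1.trans (hbr.trans h2.symm)
  · exact h1.trans (hbr.symm.trans h2.symm)
  · exact h1.trans h2.symm

end conn2
instance : Finite (Conflict φ) := by unfold Conflict; infer_instance
instance : Finite (PendIdx φ) := by unfold PendIdx Conflict; infer_instance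
instance : Finite (Vtx φ) := by unfold Vtx PendIdx Conflict; infer_instance

lemma four_le_ncard (hm : 2 ≤ φ.length) : 4 ≤ (SepS φ I).ncard := by
  classical
  have h0 : 0 < φ.length := by omega
  have h1 : 1 < φ.length := by omega
  set j0 : Fin φ.length := ⟨0, h0⟩ with hj0
  set j1 : Fin φ.length := ⟨1, h1⟩ with hj1
  have hj : j0 ≠ j1 := by
    intro h; exact absurd (congrArg Fin.val h) (by simp [hj0, hj1])
  set e : Fin φ.length → Fin 3 → Vtx φ := fun j i =>
    if I (lvar φ j i) then pathV φ j i 0 else pathV φ j i 2 with he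
  have hmem : ∀ j i, e j i ∈ SepS φ I := by
    intro j i
    by_cases h : I (lvar φ j i)
    · rw [he]; simp only [h, if_true]; exact u_mem_S.mpr h
    · rw [he]; simp only [h, if_false]; exact w_mem_S.mpr h
  have hinj : ∀ j i j' i', e j i = e j' i' → j = j' ∧ i = i' := by
    intro j i j' i' h
    rw [he] at h; simp only at h
    split_ifs at h <;> exact ⟨(pathV_inj.mp h).1, (pathV_inj.mp h).2.1⟩
  have d1 : e j0 0 ≠ e j0 1 := fun h => absurd (hinj _ _ _ _ h).2 (by decide)
  have d2 : e j0 0 ≠ e j1 0 := fun h => hj (hinj _ _ _ _ h).1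
  have d3 : e j0 0 ≠ e j1 1 := fun h => hj (hinj _ _ _ _ h).1
  have d4 : e j0 1 ≠ e j1 0 := fun h => hj (hinj _ _ _ _ h).1
  have d5 : e j0 1 ≠ e j1 1 := fun h => hj (hinj _ _ _ _ h).1
  have d6 : e j1 0 ≠ e j1 1 := fun h => absurd (hinj _ _ _ _ h).2 (by decide)
  have hsub : ({e j0 0, e j0 1, e j1 0, e j1 1} : Set (Vtx φ)) ⊆ SepS φ I := by
    rintro x (rfl | rfl | rfl | rfl) <;> exact hmem _ _
  have hcard : ({e j0 0, e j0 1, e j1 0, e j1 1} : Set (Vtx φ)).ncard = 4 := by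
    rw [Set.ncard_insert_of_notMem (by simp [d1, d2, d3]),
        Set.ncard_insert_of_notMem (by simp [d4, d5]),
        Set.ncard_insert_of_notMem (by simp [d6]),
        Set.ncard_singleton]
  calc 4 = ({e j0 0, e j0 1, e j1 0, e j1 1} : Set (Vtx φ)).ncard := hcard.symm
    _ ≤ (SepS φ I).ncard := Set.ncard_le_ncard hsub (Set.toFinite _)

/-- If I is a satisfying assignment of φ, then T(I) ∪ F(I) ∪ {c_j : C_j traversable} is a
minimal a-b separator of G(φ) of size at least 4, and moreover an inclusion-wise minimal
separator. -/
theorem satisfying_assignment_gives_inclMinSep (φ : CNF3) (hm : 2 ≤ φ.length)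
    (I : ℕ → Prop) (hI : ∀ C ∈ φ, ClauseHolds I C) :
    IsMinABSep (Gred φ)
        (TSet φ I ∪ FSet φ I ∪ {x | ∃ j, x = cV φ j ∧ TraversableClause φ I j}) (aV φ) (bV φ) ∧
    4 ≤ (TSet φ I ∪ FSet φ I ∪ {x | ∃ j, x = cV φ j ∧ TraversableClause φ I j}).ncard ∧
    IsInclMinSep (Gred φ)
        (TSet φ I ∪ FSet φ I ∪ {x | ∃ j, x = cV φ j ∧ TraversableClause φ I j}) := by
  show IsMinABSep (Gred φ) (SepS φ I) (aV φ) (bV φ) ∧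
    4 ≤ (SepS φ I).ncard ∧ IsInclMinSep (Gred φ) (SepS φ I)
  have ha : aV φ ∈ (SepS φ I)ᶜ := a_not_S
  have hb : bV φ ∈ (SepS φ I)ᶜ := b_not_S
  have hAB : IsABSep (Gred φ) (SepS φ I) (aV φ) (bV φ) := ⟨ha, hb, not_reach_ab ha hb⟩
  have hmin : ∀ T ⊂ SepS φ I, ¬ IsSep (Gred φ) T := by
    rintro T hTs ⟨u, v, hu, hv, hnr⟩
    exact hnr (conn_of_ssubset hI hTs _ _)
  exact ⟨⟨hAB, fun T hTs hABT => hmin T hTs ⟨_, _, hABT⟩⟩, four_le_ncard hm,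
    ⟨⟨_, _, hAB⟩, hmin⟩⟩
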